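/- Let V be an infinite-dimensional complex Hilbert space. Then there exists a sequence of holomorphic maps H_k : ℂ → End V, k ∈ ℕ, such that H_k(ζ) is invertible for every ζ ∈ ℂ and every k, H_k(0) = Id, and H_k converges locally uniformly in the operator norm to a holomorphic map H : ℂ → End V for which the set {ζ ∈ ℂ : H(ζ) is invertible} is nonempty but not equal to ℂ. -/

import Mathlib

open Complex Metric Filter Set
open scoped ENNReal NNReal

noncomputable section

set_option linter.unusedSectionVars false

variable {V : Type*} [NormedAddCommGroup V] [InnerProductSpace ℂ V] [CompleteSpace V]

namespace HurwitzAux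

local notation "⟪" x ", " y "⟫" => @inner ℂ _ _ x y

variable {e : ℕ → V}

/-- weighted `d`-shift, as a bare function. -/
def sfun (e : ℕ → V) (d : ℕ) (w : ℕ → ℂ) (x : V) : V :=
  ∑' n, (w n * ⟪e n, x⟫) • e (n + d)

theorem summable_sq (he : Orthonormal ℂ e) {w : ℕ → ℂ} {C : ℝ} (hw : ∀ n, ‖w n‖ ≤ C)
    (x : V) : Summable fun n => ‖w n * ⟪e n, x⟫‖ ^ 2 := by
  have hsum : Summable fun n => C ^ 2 * ‖⟪e n, x⟫‖ ^ 2 :=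
    (he.inner_products_summable x).mul_left _
  refine Summable.of_nonneg_of_le (fun n => by positivity) (fun n => ?_) hsum
  rw [norm_mul, mul_pow]
  have h0 : (0:ℝ) ≤ ‖w n‖ := norm_nonneg _
  have : ‖w n‖ ^ 2 ≤ C ^ 2 := by nlinarith [hw n]
  nlinarith [sq_nonneg ‖⟪e n, x⟫‖]

theorem summable_aux (he : Orthonormal ℂ e) {w : ℕ → ℂ} {C : ℝ} (hw : ∀ n, ‖w n‖ ≤ C)
    (d : ℕ) (x : V) : Summable fun n => (w n * ⟪e n, x⟫) • e (n + d) := by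
  have he' : Orthonormal ℂ (fun n => e (n + d)) :=
    he.comp _ (add_left_injective d)
  have key := he'.orthogonalFamily.summable_iff_norm_sq_summable (fun n => w n * ⟪e n, x⟫)
  simp only [LinearIsometry.toSpanSingleton_apply] at key
  rw [key]
  exact summable_sq he hw x

theorem norm_sfun_le (he : Orthonormal ℂ e) {w : ℕ → ℂ} {C : ℝ} (hC : 0 ≤ C)
    (hw : ∀ n, ‖w n‖ ≤ C) (d : ℕ) (x : V) : ‖sfun e d w x‖ ≤ C * ‖x‖ := by
  have hs := summable_aux he hw d x
  have ht : Tendsto (fun s : Finset ℕ => ‖∑ n ∈ s, (w n * ⟪e n, x⟫) • e (n + d)‖)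
      atTop (nhds ‖sfun e d w x‖) := (continuous_norm.tendsto _).comp hs.hasSum
  refine le_of_tendsto ht (Eventually.of_forall fun s => ?_)
  have he' : Orthonormal ℂ (fun n => e (n + d)) := he.comp _ (add_left_injective d)
  have h1 : ‖∑ n ∈ s, (w n * ⟪e n, x⟫) • e (n + d)‖ ^ 2
      = ∑ n ∈ s, ‖w n * ⟪e n, x⟫‖ ^ 2 := by
    have := he'.orthogonalFamily.norm_sum (fun n => w n * ⟪e n, x⟫) s
    simpa only [LinearIsometry.toSpanSingleton_apply] using this
  have h2 : ∑ n ∈ s, ‖w n * ⟪e n, x⟫‖ ^ 2 ≤ C ^ 2 * ‖x‖ ^ 2 := by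
    calc ∑ n ∈ s, ‖w n * ⟪e n, x⟫‖ ^ 2 ≤ ∑ n ∈ s, C ^ 2 * ‖⟪e n, x⟫‖ ^ 2 := by
          refine Finset.sum_le_sum fun n _ => ?_
          rw [norm_mul, mul_pow]
          have h0 : (0:ℝ) ≤ ‖w n‖ := norm_nonneg _
          have : ‖w n‖ ^ 2 ≤ C ^ 2 := by nlinarith [hw n]
          nlinarith [sq_nonneg ‖⟪e n, x⟫‖]
      _ = C ^ 2 * ∑ n ∈ s, ‖⟪e n, x⟫‖ ^ 2 := by rw [Finset.mul_sum]
      _ ≤ C ^ 2 * ‖x‖ ^ 2 :=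
          mul_le_mul_of_nonneg_left (he.sum_inner_products_le x) (by positivity)
  have h3 : ‖∑ n ∈ s, (w n * ⟪e n, x⟫) • e (n + d)‖ ^ 2 ≤ (C * ‖x‖) ^ 2 := by
    rw [h1, mul_pow]; exact h2
  exact (pow_le_pow_iff_left₀ (norm_nonneg _) (by positivity) two_ne_zero).mp h3

theorem inner_sfun (he : Orthonormal ℂ e) {w : ℕ → ℂ} {C : ℝ} (hw : ∀ n, ‖w n‖ ≤ C)
    (d : ℕ) (x : V) (j : ℕ) :
    ⟪e j, sfun e d w x⟫ = if d ≤ j then w (j - d) * ⟪e (j - d), x⟫ else 0 := by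
  have hs := summable_aux he hw d x
  have h1 : ⟪e j, sfun e d w x⟫ = ∑' n, ⟪e j, (w n * ⟪e n, x⟫) • e (n + d)⟫ :=
    (innerSL ℂ (e j)).map_tsum hs
  simp only [inner_smul_right] at h1
  rw [h1]
  have horth : ∀ i k : ℕ, ⟪e i, e k⟫ = if i = k then 1 else 0 :=
    orthonormal_iff_ite.mp he
  by_cases hd : d ≤ j
  · rw [if_pos hd, tsum_eq_single (j - d)]
    · rw [horth j (j - d + d), if_pos (by omega), mul_one]
    · intro n hn
      rw [horth j (n + d), if_neg (by omega), mul_zero]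
  · rw [if_neg hd]
    have : ∀ n, (w n * ⟪e n, x⟫) * ⟪e j, e (n + d)⟫ = 0 := by
      intro n
      rw [horth j (n + d), if_neg (by omega), mul_zero]
    simp only [this, tsum_zero]

theorem sfun_comp (he : Orthonormal ℂ e) {w w' : ℕ → ℂ} {C C' : ℝ}
    (hw : ∀ n, ‖w n‖ ≤ C) (hw' : ∀ n, ‖w' n‖ ≤ C') (d d' : ℕ) (x : V) :
    sfun e d w (sfun e d' w' x) = sfun e (d' + d) (fun n => w' n * w (n + d')) x := by
  have h1 : sfun e d w (sfun e d' w' x)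
      = ∑' n, (w n * ⟪e n, sfun e d' w' x⟫) • e (n + d) := rfl
  rw [h1]
  have h2 : ∀ n, (w n * ⟪e n, sfun e d' w' x⟫) • e (n + d)
      = (w n * (if d' ≤ n then w' (n - d') * ⟪e (n - d'), x⟫ else 0)) • e (n + d) := by
    intro n; rw [inner_sfun he hw' d' x n]
  simp only [h2]
  have hinj : Function.Injective (fun m : ℕ => m + d') := add_left_injective d'
  rw [← hinj.tsum_eq (f := fun n =>
      (w n * (if d' ≤ n then w' (n - d') * ⟪e (n - d'), x⟫ else 0)) • e (n + d))]
  · refine tsum_congr fun m => ?_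
    simp only
    rw [if_pos (by omega)]
    have hm : m + d' - d' = m := by omega
    rw [hm]
    have h3 : m + d' + d = m + (d' + d) := by omega
    rw [h3]
    ring_nf
  · intro n hn
    rcases le_or_gt d' n with h | h
    · exact ⟨n - d', by dsimp only; omega⟩
    · exfalso; apply hn; dsimp only; rw [if_neg (by omega), mul_zero, zero_smul]

theorem sfun_add (he : Orthonormal ℂ e) {w : ℕ → ℂ} {C : ℝ} (hw : ∀ n, ‖w n‖ ≤ C)
    (d : ℕ) (x y : V) : sfun e d w (x + y) = sfun e d w x + sfun e d w y := by
  rw [sfun, sfun, sfun, ← Summable.tsum_add (summable_aux he hw d x) (summable_aux he hw d y)]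
  refine tsum_congr fun n => ?_
  rw [inner_add_right, mul_add, add_smul]

theorem sfun_smul (he : Orthonormal ℂ e) {w : ℕ → ℂ} {C : ℝ} (hw : ∀ n, ‖w n‖ ≤ C)
    (d : ℕ) (c : ℂ) (x : V) : sfun e d w (c • x) = c • sfun e d w x := by
  rw [sfun, sfun, ← Summable.tsum_const_smul c (summable_aux he hw d x)]
  refine tsum_congr fun n => ?_
  rw [inner_smul_right, smul_smul]
  ring_nf

theorem sfun_sub_w (he : Orthonormal ℂ e) {w w' : ℕ → ℂ} {C C' : ℝ}
    (hw : ∀ n, ‖w n‖ ≤ C) (hw' : ∀ n, ‖w' n‖ ≤ C') (d : ℕ) (x : V) :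
    sfun e d w x - sfun e d w' x = sfun e d (w - w') x := by
  rw [sfun, sfun, sfun, ← Summable.tsum_sub (summable_aux he hw d x) (summable_aux he hw' d x)]
  refine tsum_congr fun n => ?_
  rw [Pi.sub_apply, sub_mul, sub_smul]

/-- the weighted `d`-shift as a continuous linear map, for weights bounded by 1. -/
def SL (he : Orthonormal ℂ e) (w : ℕ → ℂ) (hw : ∀ n, ‖w n‖ ≤ 1) (d : ℕ) : V →L[ℂ] V :=
  LinearMap.mkContinuous
    { toFun := sfun e d w
      map_add' := sfun_add he hw d
      map_smul' := sfun_smul he hw d }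
    1 (fun x => by simpa using norm_sfun_le he zero_le_one hw d x)

@[simp] theorem SL_apply (he : Orthonormal ℂ e) (w : ℕ → ℂ) (hw : ∀ n, ‖w n‖ ≤ 1) (d : ℕ)
    (x : V) : SL he w hw d x = sfun e d w x := rfl

theorem norm_SL_sub_le (he : Orthonormal ℂ e) {w w' : ℕ → ℂ}
    (hw : ∀ n, ‖w n‖ ≤ 1) (hw' : ∀ n, ‖w' n‖ ≤ 1) (d : ℕ) {C : ℝ} (hC : 0 ≤ C)
    (hsub : ∀ n, ‖w n - w' n‖ ≤ C) :
    ‖SL he w hw d - SL he w' hw' d‖ ≤ C := by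
  refine ContinuousLinearMap.opNorm_le_bound _ hC fun x => ?_
  rw [ContinuousLinearMap.sub_apply, SL_apply, SL_apply, sfun_sub_w he hw hw' d x]
  exact norm_sfun_le he hC (fun n => hsub n) d x

theorem SL_pow (he : Orthonormal ℂ e) (w : ℕ → ℂ) (hw : ∀ n, ‖w n‖ ≤ 1) (m : ℕ) (x : V) :
    ((SL he w hw 1) ^ (m + 1)) x
      = sfun e (m + 1) (fun n => ∏ i ∈ Finset.range (m + 1), w (n + i)) x := by
  induction m with
  | zero =>
    rw [pow_one, SL_apply]
    congr 1
    ext n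
    simp
  | succ m ih =>
    have hW : ∀ n, ‖∏ i ∈ Finset.range (m + 1), w (n + i)‖ ≤ 1 := by
      intro n
      calc ‖∏ i ∈ Finset.range (m + 1), w (n + i)‖
          = ∏ i ∈ Finset.range (m + 1), ‖w (n + i)‖ := norm_prod _ _
        _ ≤ ∏ i ∈ Finset.range (m + 1), 1 :=
            Finset.prod_le_prod (fun i _ => norm_nonneg _) (fun i _ => hw _)
        _ = 1 := by simp
    have h1 : ((SL he w hw 1) ^ (m + 1 + 1)) x = (SL he w hw 1) (((SL he w hw 1) ^ (m + 1)) x) := by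
      rw [pow_succ']; rfl
    rw [h1, ih, SL_apply,
      sfun_comp he hw hW 1 (m + 1) x]
    congr 1
    ext n
    rw [Finset.prod_range_succ, Finset.prod_range_succ, Finset.prod_range_succ]

theorem sfun_zero_w (d : ℕ) (x : V) : sfun e d (fun _ => (0:ℂ)) x = 0 := by
  rw [sfun]
  simp

/-- base weights -/
def u : ℕ → ℂ := fun n => (2:ℂ)⁻¹ ^ (padicValNat 2 (n + 1))

/-- truncated weights -/
def uk (k : ℕ) : ℕ → ℂ := fun n => if 2 ^ k ∣ (n + 1) then 0 else u n

theorem norm_u (n : ℕ) : ‖u n‖ = (2⁻¹ : ℝ) ^ (padicValNat 2 (n + 1)) := by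
  rw [u, norm_pow, norm_inv]
  norm_num

theorem norm_u_le_one (n : ℕ) : ‖u n‖ ≤ 1 := by
  rw [norm_u]
  exact pow_le_one₀ (by norm_num) (by norm_num)

theorem norm_uk_le_one (k n : ℕ) : ‖uk k n‖ ≤ 1 := by
  rw [uk]
  split
  · simp
  · exact norm_u_le_one n

theorem norm_u_sub_uk (k n : ℕ) : ‖u n - uk k n‖ ≤ (2⁻¹ : ℝ) ^ k := by
  rw [uk]
  split
  · next hdvd =>
    rw [sub_zero, norm_u]
    have hk : k ≤ padicValNat 2 (n + 1) := by
      rw [padicValNat_dvd_iff] at hdvd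
      rcases hdvd with h | h
      · omega
      · exact h
    exact pow_le_pow_of_le_one (by norm_num) (by norm_num) hk
  · rw [sub_self, norm_zero]
    positivity

theorem uk_window_zero (k n : ℕ) : ∏ i ∈ Finset.range (2 ^ k), uk k (n + i) = 0 := by
  have h2k : 0 < 2 ^ k := Nat.pow_pos (n := k) (by norm_num)
  set q := n % 2 ^ k with hq
  have hqlt : q < 2 ^ k := Nat.mod_lt _ h2k
  have hdm := Nat.div_add_mod n (2 ^ k)
  refine Finset.prod_eq_zero (Finset.mem_range.mpr (show 2 ^ k - 1 - q < 2 ^ k by omega)) ?_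
  rw [uk, if_pos]
  refine ⟨n / 2 ^ k + 1, ?_⟩
  have hmul : 2 ^ k * (n / 2 ^ k + 1) = 2 ^ k * (n / 2 ^ k) + 2 ^ k := by ring
  omega

theorem Tk_nilpotent (he : Orthonormal ℂ e) (k : ℕ) :
    (SL he (uk k) (norm_uk_le_one k) 1) ^ (2 ^ k) = 0 := by
  ext x
  have h2k : 0 < 2 ^ k := Nat.pow_pos (n := k) (by norm_num)
  have hm : 2 ^ k = (2 ^ k - 1) + 1 := by omega
  rw [hm]
  rw [SL_pow he (uk k) (norm_uk_le_one k) (2 ^ k - 1) x]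
  have hzero : (fun n => ∏ i ∈ Finset.range (2 ^ k - 1 + 1), uk k (n + i)) = fun _ => (0:ℂ) := by
    ext n
    rw [← hm]
    exact uk_window_zero k n
  rw [hzero, sfun_zero_w]
  simp

theorem sum_padic_le (m : ℕ) : ∑ i ∈ Finset.range m, padicValNat 2 (i + 1) ≤ m := by
  have hfac : ∀ m : ℕ, ∑ i ∈ Finset.range m, padicValNat 2 (i + 1)
      = padicValNat 2 (Nat.factorial m) := by
    intro m
    induction m with
    | zero => simp
    | succ m ih =>
      rw [Finset.sum_range_succ, ih, Nat.factorial_succ,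
        padicValNat.mul (by omega) (Nat.factorial_ne_zero m)]
      ring
  rw [hfac]
  have := sub_one_mul_padicValNat_factorial (p := 2) m
  omega

theorem T_pow_apply_e0 (he : Orthonormal ℂ e) (m : ℕ) :
    ((SL he u norm_u_le_one 1) ^ (m + 1)) (e 0)
      = (∏ i ∈ Finset.range (m + 1), u i) • e (m + 1) := by
  rw [SL_pow he u norm_u_le_one m (e 0), sfun]
  have horth : ∀ i k : ℕ, ⟪e i, e k⟫ = if i = k then 1 else 0 := orthonormal_iff_ite.mp he
  rw [tsum_eq_single 0]
  · rw [horth 0 0, if_pos rfl, mul_one, zero_add]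
    congr 1
    refine Finset.prod_congr rfl fun i _ => ?_
    rw [zero_add]
  · intro n hn
    rw [horth n 0, if_neg hn, mul_zero, zero_smul]

theorem norm_T_pow_ge (he : Orthonormal ℂ e) (m : ℕ) :
    ((2:ℝ)⁻¹) ^ (m + 1) ≤ ‖(SL he u norm_u_le_one 1) ^ (m + 1)‖ := by
  have h0 := T_pow_apply_e0 he m
  have hne : ‖e (m+1)‖ = 1 := he.1 (m+1)
  have hval : ‖((SL he u norm_u_le_one 1) ^ (m + 1)) (e 0)‖
      = ∏ i ∈ Finset.range (m + 1), ‖u i‖ := by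
    rw [h0, norm_smul, hne, mul_one, norm_prod]
  have hprod : ((2:ℝ)⁻¹) ^ (m + 1) ≤ ∏ i ∈ Finset.range (m + 1), ‖u i‖ := by
    have heq : ∏ i ∈ Finset.range (m + 1), ‖u i‖
        = (2⁻¹:ℝ) ^ (∑ i ∈ Finset.range (m + 1), padicValNat 2 (i + 1)) := by
      simp only [norm_u]
      rw [Finset.prod_pow_eq_pow_sum]
    rw [heq]
    exact pow_le_pow_of_le_one (by norm_num) (by norm_num) (sum_padic_le (m + 1))
  have hle : ‖((SL he u norm_u_le_one 1) ^ (m + 1)) (e 0)‖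
      ≤ ‖(SL he u norm_u_le_one 1) ^ (m + 1)‖ := by
    have h := ((SL he u norm_u_le_one 1) ^ (m + 1)).le_opNorm (e 0)
    rwa [he.1 0, mul_one] at h
  calc ((2:ℝ)⁻¹) ^ (m + 1) ≤ ∏ i ∈ Finset.range (m + 1), ‖u i‖ := hprod
    _ = ‖((SL he u norm_u_le_one 1) ^ (m + 1)) (e 0)‖ := hval.symm
    _ ≤ _ := hle

theorem sr_ge (he : Orthonormal ℂ e) :
    (2:ℝ≥0∞)⁻¹ ≤ spectralRadius ℂ (SL he u norm_u_le_one 1) := by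
  set T := SL he u norm_u_le_one 1 with hT
  have hg := spectrum.pow_nnnorm_pow_one_div_tendsto_nhds_spectralRadius T
  refine ge_of_tendsto hg ?_
  rw [eventually_atTop]
  refine ⟨1, fun n hn => ?_⟩
  have hnorm : ((2:ℝ)⁻¹) ^ n ≤ ‖T ^ n‖ := by
    obtain ⟨m, rfl⟩ : ∃ m, n = m + 1 := ⟨n - 1, by omega⟩
    exact norm_T_pow_ge he m
  have hnn : ((2:ℝ≥0)⁻¹) ^ n ≤ ‖T ^ n‖₊ := by
    rw [← NNReal.coe_le_coe]
    push_cast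
    exact hnorm
  have hnn' : ((2:ℝ≥0∞)⁻¹) ^ n ≤ (‖T ^ n‖₊ : ℝ≥0∞) := by
    have h2 : ((2:ℝ≥0∞))⁻¹ = ((2⁻¹ : ℝ≥0) : ℝ≥0∞) := by
      rw [ENNReal.coe_inv (by norm_num)]
      norm_num
    rw [h2, ← ENNReal.coe_pow, ENNReal.coe_le_coe]
    exact hnn
  calc (2:ℝ≥0∞)⁻¹ = (((2:ℝ≥0∞)⁻¹) ^ n) ^ (1 / (n:ℝ)) := by
        rw [← ENNReal.rpow_natCast _ n, ← ENNReal.rpow_mul]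
        rw [mul_one_div, div_self (by exact_mod_cast (by omega : n ≠ 0)), ENNReal.rpow_one]
    _ ≤ (‖T ^ n‖₊ : ℝ≥0∞) ^ (1 / (n:ℝ)) := by
        exact ENNReal.rpow_le_rpow hnn' (by positivity)

theorem exists_spec (he : Orthonormal ℂ e) :
    ∃ l : ℂ, l ∈ spectrum ℂ (SL he u norm_u_le_one 1) ∧ l ≠ 0 := by
  by_contra h
  push_neg at h
  have hle : spectralRadius ℂ (SL he u norm_u_le_one 1) ≤ 0 := by
    rw [spectralRadius]
    refine iSup₂_le fun l hl => ?_
    rw [h l hl]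
    simp
  have h2 := (sr_ge he).trans hle
  rw [le_zero_iff, ENNReal.inv_eq_zero] at h2
  exact (by norm_num : (2:ℝ≥0∞) ≠ ⊤) h2

theorem exists_orthonormal_seq (hV : ¬ FiniteDimensional ℂ V) :
    ∃ e : ℕ → V, Orthonormal ℂ e := by
  obtain ⟨w, b, hb⟩ := exists_hilbertBasis ℂ V
  have hinf : w.Infinite := by
    by_contra hfin
    rw [Set.not_infinite] at hfin
    apply hV
    haveI := FiniteDimensional.span_of_finite ℂ hfin
    have hd := b.dense_span
    rw [hb, Subtype.range_coe] at hd
    have hclosed := (Submodule.span ℂ w).closed_of_finiteDimensional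
    rw [hclosed.submodule_topologicalClosure_eq] at hd
    rw [hd] at this
    exact (Submodule.topEquiv (R := ℂ) (M := V)).finiteDimensional
  let f := hinf.natEmbedding
  have ho := b.orthonormal.comp f f.injective
  exact ⟨_, ho⟩

end HurwitzAux

open HurwitzAux

/-- Lemma 5.2: failure of Hurwitz's theorem in infinite rank:
there is a sequence of entire, everywhere invertible, operator-valued maps
`H_k` with `H_k(0) = Id`, converging locally uniformly in operator norm to an
entire map `H` whose set of invertibility is nonempty but not all of `ℂ`. -/
theorem hurwitz_fails_infinite_rank
    (hV : ¬ FiniteDimensional ℂ V) :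
    ∃ H : ℕ → ℂ → (V →L[ℂ] V), ∃ Hlim : ℂ → (V →L[ℂ] V),
      (∀ k, Differentiable ℂ (H k)) ∧
      (∀ k, ∀ ζ : ℂ, IsUnit (H k ζ)) ∧
      (∀ k, H k 0 = 1) ∧
      Differentiable ℂ Hlim ∧
      TendstoLocallyUniformly (fun k => H k) Hlim atTop ∧
      {ζ : ℂ | IsUnit (Hlim ζ)}.Nonempty ∧
      {ζ : ℂ | IsUnit (Hlim ζ)} ≠ univ := by
  obtain ⟨e, he⟩ := exists_orthonormal_seq hV
  set T : V →L[ℂ] V := SL he u norm_u_le_one 1 with hTdef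
  set Tk : ℕ → (V →L[ℂ] V) := fun k => SL he (uk k) (norm_uk_le_one k) 1 with hTkdef
  refine ⟨fun k ζ => 1 - ζ • Tk k, fun ζ => 1 - ζ • T, ?_, ?_, ?_, ?_, ?_, ?_, ?_⟩
  · intro k
    exact (differentiable_const _).sub (differentiable_id.smul_const (Tk k))
  · intro k ζ
    have hnil : IsNilpotent (ζ • Tk k) :=
      ⟨2 ^ k, by rw [smul_pow, hTkdef]; simp only []; rw [Tk_nilpotent he k, smul_zero]⟩
    exact hnil.isUnit_one_sub
  · intro k
    show (1:V →L[ℂ] V) - (0:ℂ) • Tk k = 1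
    rw [zero_smul, sub_zero]
  · exact (differentiable_const _).sub (differentiable_id.smul_const T)
  · rw [Metric.tendstoLocallyUniformly_iff]
    intro ε hε ζ0
    refine ⟨ball ζ0 1, ball_mem_nhds _ one_pos, ?_⟩
    have h0 : Tendsto (fun k : ℕ => (‖ζ0‖ + 1) * (2⁻¹:ℝ) ^ k) atTop (nhds 0) := by
      have := tendsto_pow_atTop_nhds_zero_of_lt_one (by norm_num : (0:ℝ) ≤ 2⁻¹)
        (by norm_num : (2⁻¹:ℝ) < 1)
      simpa using this.const_mul (‖ζ0‖ + 1)
    filter_upwards [h0.eventually (gt_mem_nhds hε)] with k hk ζ hζ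
    have hTTk : ‖Tk k - T‖ ≤ (2⁻¹:ℝ) ^ k := by
      refine norm_SL_sub_le he (norm_uk_le_one k) norm_u_le_one 1 (by positivity) fun n => ?_
      rw [norm_sub_rev]
      exact norm_u_sub_uk k n
    have hdist : dist ((1:V →L[ℂ] V) - ζ • T) (1 - ζ • Tk k) = ‖ζ‖ * ‖Tk k - T‖ := by
      rw [dist_eq_norm]
      have : ((1:V →L[ℂ] V) - ζ • T) - (1 - ζ • Tk k) = ζ • (Tk k - T) := by
        rw [smul_sub]; abel
      rw [this, norm_smul]
    rw [hdist]
    have hζn : ‖ζ‖ ≤ ‖ζ0‖ + 1 := by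
      have := mem_ball_iff_norm.mp hζ
      calc ‖ζ‖ = ‖ζ0 + (ζ - ζ0)‖ := by ring_nf
        _ ≤ ‖ζ0‖ + ‖ζ - ζ0‖ := norm_add_le _ _
        _ ≤ ‖ζ0‖ + 1 := by linarith
    calc ‖ζ‖ * ‖Tk k - T‖ ≤ (‖ζ0‖ + 1) * (2⁻¹:ℝ) ^ k := by
          apply mul_le_mul hζn hTTk (norm_nonneg _) (by positivity)
      _ < ε := hk
  · exact ⟨0, by simp⟩
  · obtain ⟨l, hl, hl0⟩ := exists_spec he
    intro huniv
    have hmem : (l⁻¹ : ℂ) ∈ {ζ : ℂ | IsUnit ((1:V →L[ℂ] V) - ζ • T)} := by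
      rw [huniv]; trivial
    have hunit : IsUnit ((1:V →L[ℂ] V) - l⁻¹ • T) := hmem
    have hsmul : l • ((1:V →L[ℂ] V) - l⁻¹ • T) = algebraMap ℂ (V →L[ℂ] V) l - T := by
      rw [smul_sub, smul_smul, mul_inv_cancel₀ hl0, one_smul, Algebra.algebraMap_eq_smul_one]
    have : IsUnit (algebraMap ℂ (V →L[ℂ] V) l - T) := by
      rw [← hsmul, Algebra.smul_def]
      exact ((isUnit_iff_ne_zero.mpr hl0).map (algebraMap ℂ (V →L[ℂ] V))).mul hunit
    exact (spectrum.mem_iff.mp hl) this
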